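/- For γ > 0 and t₄ ∈ ℝ, define the quartic spectral density ρ(x) = (1/2π)(t₄(x² − γ²) + 1/γ²)√(4γ² − x²) for x ∈ [−2γ, 2γ] (and ρ = 0 outside), and set c = (1 − 3t₄γ⁴)/γ². Then for every real x with x > 2γ, ∫_{−2γ}^{2γ} ρ(y)/(x − y) dy = (1/2)( c·x + t₄x³ − (t₄(x² − γ²) + 1/γ²)√(x² − 4γ²) ). -/

import Mathlib

open Real Set intervalIntegral

set_option maxHeartbeats 1000000 in
theorem quartic_stieltjes (γ t₄ : ℝ) (hγ : 0 < γ) (x : ℝ) (hx : 2 * γ < x) :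
    ∫ y in (-(2 * γ))..(2 * γ),
        ((1 / (2 * Real.pi)) * (t₄ * (y ^ 2 - γ ^ 2) + 1 / γ ^ 2) *
          Real.sqrt (4 * γ ^ 2 - y ^ 2)) / (x - y) =
      (1 / 2) * (((1 - 3 * t₄ * γ ^ 4) / γ ^ 2) * x + t₄ * x ^ 3 -
        (t₄ * (x ^ 2 - γ ^ 2) + 1 / γ ^ 2) * Real.sqrt (x ^ 2 - 4 * γ ^ 2)) := by
  have hγ0 : γ ≠ 0 := hγ.ne'
  have h2γ : (0:ℝ) < 2 * γ := by linarith
  have hx0 : 0 < x := lt_trans h2γ hx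
  have hxs : 0 < x ^ 2 - 4 * γ ^ 2 := by nlinarith
  have hπ : Real.pi ≠ 0 := Real.pi_ne_zero
  set s : ℝ := Real.sqrt (x ^ 2 - 4 * γ ^ 2) with hs
  have hs2 : s ^ 2 = x ^ 2 - 4 * γ ^ 2 := Real.sq_sqrt hxs.le
  have hspos : 0 < s := Real.sqrt_pos.mpr hxs
  set Q : ℝ := t₄ * x ^ 2 + (1 / γ ^ 2 - t₄ * γ ^ 2) with hQdef
  set F : ℝ → ℝ := fun y =>
    (1 / (2 * Real.pi)) *
      (t₄ * ((1/3) * Real.sqrt (4 * γ ^ 2 - y ^ 2) ^ 3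
          - x * ((1/2) * (y * Real.sqrt (4 * γ ^ 2 - y ^ 2)
              + 4 * γ ^ 2 * Real.arcsin (y / (2 * γ)))))
        + Q * (x * Real.arcsin (y / (2 * γ)) - Real.sqrt (4 * γ ^ 2 - y ^ 2)
            + s * Real.arcsin ((4 * γ ^ 2 - x * y) / (2 * γ * (x - y))))) with hFdef
  have key : ∀ y ∈ Set.Ioo (-(2 * γ)) (2 * γ), HasDerivAt F
      (((1 / (2 * Real.pi)) * (t₄ * (y ^ 2 - γ ^ 2) + 1 / γ ^ 2) *
          Real.sqrt (4 * γ ^ 2 - y ^ 2)) / (x - y)) y := by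
    rintro y ⟨hy1, hy2⟩
    have hgy : 0 < 4 * γ ^ 2 - y ^ 2 := by nlinarith
    set g : ℝ := Real.sqrt (4 * γ ^ 2 - y ^ 2) with hg
    have hg2 : g ^ 2 = 4 * γ ^ 2 - y ^ 2 := Real.sq_sqrt hgy.le
    have hgpos : 0 < g := Real.sqrt_pos.mpr hgy
    have hxy : 0 < x - y := by linarith
    -- inner derivative of 4γ² - y²
    have hin : HasDerivAt (fun t : ℝ => 4 * γ ^ 2 - t ^ 2) (-(2 * y)) y := by
      simpa using (hasDerivAt_pow 2 y).const_sub (4 * γ ^ 2)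
    -- derivative of sqrt part
    have hg' : HasDerivAt (fun t : ℝ => Real.sqrt (4 * γ ^ 2 - t ^ 2)) (-y / g) y := by
      have h := (Real.hasDerivAt_sqrt hgy.ne').comp y hin
      refine h.congr_deriv (Eq.symm ?_)
      rw [← hg]
      field_simp
    -- derivative of the cube
    have hcube : HasDerivAt (fun t : ℝ => (1/3) * Real.sqrt (4 * γ ^ 2 - t ^ 2) ^ 3)
        (-y * g) y := by
      have h := (hg'.pow 3).const_mul (1/3 : ℝ)
      refine h.congr_deriv (Eq.symm ?_)
      rw [← hg]
      field_simp
      ring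
    -- derivative of arcsin(y/(2γ))
    have hsq1 : Real.sqrt (1 - (y / (2 * γ)) ^ 2) = g / (2 * γ) := by
      rw [show (1:ℝ) - (y / (2 * γ)) ^ 2 = (4 * γ ^ 2 - y ^ 2) / (2 * γ) ^ 2 by
        field_simp; ring]
      rw [Real.sqrt_div hgy.le, Real.sqrt_sq h2γ.le]
    have harc1 : HasDerivAt (fun t : ℝ => Real.arcsin (t / (2 * γ))) (1 / g) y := by
      have hne1 : y / (2 * γ) ≠ -1 := by
        intro h; rw [div_eq_iff h2γ.ne'] at h; linarith
      have hne2 : y / (2 * γ) ≠ 1 := by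
        intro h; rw [div_eq_iff h2γ.ne'] at h; linarith
      have hd : HasDerivAt (fun t : ℝ => t / (2 * γ)) (1 / (2 * γ)) y := by
        simpa using (hasDerivAt_id y).div_const (2 * γ)
      have h := (Real.hasDerivAt_arcsin hne1 hne2).comp y hd
      refine h.congr_deriv (Eq.symm ?_)
      rw [hsq1]
      field_simp
    -- derivative of arcsin of the cross ratio
    have harcu : HasDerivAt
        (fun t : ℝ => Real.arcsin ((4 * γ ^ 2 - x * t) / (2 * γ * (x - t))))
        (-(s / ((x - y) * g))) y := by
      have hden : 2 * γ * (x - y) ≠ 0 := by positivity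
      have hu1 : (4 * γ ^ 2 - x * y) / (2 * γ * (x - y)) ≠ 1 := by
        intro h
        rw [div_eq_one_iff_eq hden] at h
        nlinarith [mul_pos (show 0 < x - 2 * γ by linarith) (show 0 < 2 * γ + y by linarith)]
      have hu2 : (4 * γ ^ 2 - x * y) / (2 * γ * (x - y)) ≠ -1 := by
        intro h
        rw [div_eq_iff hden] at h
        nlinarith [mul_pos (show 0 < x + 2 * γ by linarith) (show 0 < 2 * γ - y by linarith)]
      have hnum : HasDerivAt (fun t : ℝ => 4 * γ ^ 2 - x * t) (-x) y := by
        simpa using ((hasDerivAt_id y).const_mul x).const_sub (4 * γ ^ 2)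
      have hden' : HasDerivAt (fun t : ℝ => 2 * γ * (x - t)) (-(2 * γ)) y := by
        simpa using ((hasDerivAt_id y).const_sub x).const_mul (2 * γ)
      have hu : HasDerivAt (fun t : ℝ => (4 * γ ^ 2 - x * t) / (2 * γ * (x - t)))
          ((-x * (2 * γ * (x - y)) - (4 * γ ^ 2 - x * y) * -(2 * γ)) / (2 * γ * (x - y)) ^ 2)
          y := hnum.div hden' hden
      have h := (Real.hasDerivAt_arcsin hu2 hu1).comp y hu
      refine h.congr_deriv (Eq.symm ?_)
      have h1u : Real.sqrt (1 - ((4 * γ ^ 2 - x * y) / (2 * γ * (x - y))) ^ 2)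
          = g * s / (2 * γ * (x - y)) := by
        have e : (g * s / (2 * γ * (x - y))) ^ 2
            = (4 * γ ^ 2 - y ^ 2) * (x ^ 2 - 4 * γ ^ 2) / (2 * γ * (x - y)) ^ 2 := by
          rw [div_pow, mul_pow, hg2, hs2]
        rw [show (1:ℝ) - ((4 * γ ^ 2 - x * y) / (2 * γ * (x - y))) ^ 2
            = (g * s / (2 * γ * (x - y))) ^ 2 by rw [e]; field_simp; ring]
        exact Real.sqrt_sq (by positivity)
      rw [h1u]
      rw [show -x * (2 * γ * (x - y)) - (4 * γ ^ 2 - x * y) * -(2 * γ)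
          = -(2 * γ) * s ^ 2 by rw [hs2]; ring]
      field_simp
    -- full middle-piece derivative
    have hmid : HasDerivAt (fun t : ℝ => (1/2) * (t * Real.sqrt (4 * γ ^ 2 - t ^ 2)
        + 4 * γ ^ 2 * Real.arcsin (t / (2 * γ)))) g y := by
      have h := (((hasDerivAt_id y).mul hg').add (harc1.const_mul (4 * γ ^ 2))).const_mul
        ((1:ℝ)/2)
      refine h.congr_deriv (Eq.symm ?_)
      rw [← hg, id_eq]
      field_simp
      linear_combination hg2
    -- assemble
    have hbig : HasDerivAt F
        ((1 / (2 * Real.pi)) * (t₄ * (-y * g - x * g)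
          + Q * (x * (1 / g) - (-y / g) + s * (-(s / ((x - y) * g)))))) y := by
      apply HasDerivAt.const_mul
      exact ((hcube.sub (hmid.const_mul x)).const_mul t₄).add
        ((((harc1.const_mul x).sub hg').add (harcu.const_mul s)).const_mul Q)
    have h1 : x * (1 / g) - (-y / g) + s * (-(s / ((x - y) * g))) = g / (x - y) := by
      have e : x * (1 / g) - (-y / g) + s * (-(s / ((x - y) * g)))
          = ((x + y) * (x - y) - s ^ 2) / ((x - y) * g) := by
        field_simp
        ring
      rw [e, hs2, show (x + y) * (x - y) - (x ^ 2 - 4 * γ ^ 2) = g ^ 2 from by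
        rw [hg2]; ring]
      rw [pow_two]
      field_simp
    have halg : (1 / (2 * Real.pi)) * (t₄ * (-y * g - x * g)
        + Q * (x * (1 / g) - (-y / g) + s * (-(s / ((x - y) * g)))))
        = ((1 / (2 * Real.pi)) * (t₄ * (y ^ 2 - γ ^ 2) + 1 / γ ^ 2) * g) / (x - y) := by
      rw [h1, hQdef]
      field_simp
      ring
    exact halg ▸ hbig
  have hle : -(2 * γ) ≤ 2 * γ := by linarith
  have c1 : Continuous fun y : ℝ => Real.sqrt (4 * γ ^ 2 - y ^ 2) :=
    Real.continuous_sqrt.comp (continuous_const.sub (continuous_pow 2))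
  have c2 : Continuous fun y : ℝ => Real.arcsin (y / (2 * γ)) :=
    Real.continuous_arcsin.comp (continuous_id.div_const _)
  have hcont : ContinuousOn F (Set.Icc (-(2 * γ)) (2 * γ)) := by
    have c3 : ContinuousOn (fun y : ℝ => Real.arcsin ((4 * γ ^ 2 - x * y) / (2 * γ * (x - y))))
        (Set.Icc (-(2 * γ)) (2 * γ)) := by
      apply Real.continuous_arcsin.comp_continuousOn
      apply ContinuousOn.div
        (continuous_const.sub (continuous_const.mul continuous_id)).continuousOn
        (continuous_const.mul (continuous_const.sub continuous_id)).continuousOn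
      intro y hy
      have h1 : y ≤ 2 * γ := hy.2
      have h2 : 0 < x - y := by linarith
      exact (mul_pos h2γ h2).ne'
    rw [hFdef]
    apply ContinuousOn.mul continuousOn_const
    apply ContinuousOn.add
    · exact (continuous_const.mul
        (((continuous_const.mul (c1.pow 3)).sub (continuous_const.mul
          (continuous_const.mul ((continuous_id.mul c1).add
            (continuous_const.mul c2))))))).continuousOn
    · exact ContinuousOn.mul continuousOn_const
        ((((continuous_const.mul c2).sub c1).continuousOn).add
          (continuousOn_const.mul c3))
  have hint : IntervalIntegrable (fun y : ℝ =>
      ((1 / (2 * Real.pi)) * (t₄ * (y ^ 2 - γ ^ 2) + 1 / γ ^ 2) *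
        Real.sqrt (4 * γ ^ 2 - y ^ 2)) / (x - y)) MeasureTheory.volume
      (-(2 * γ)) (2 * γ) := by
    apply ContinuousOn.intervalIntegrable
    apply ContinuousOn.div
    · exact ((continuous_const.mul ((continuous_const.mul ((continuous_pow 2).sub
        continuous_const)).add continuous_const)).mul c1).continuousOn
    · exact (continuous_const.sub continuous_id).continuousOn
    · intro y hy
      rw [Set.uIcc_of_le hle] at hy
      have : y ≤ 2 * γ := hy.2
      have : 0 < x - y := by linarith
      exact this.ne'
  rw [intervalIntegral.integral_eq_sub_of_hasDeriv_right_of_le hle hcont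
    (fun y hy => (key y hy).hasDerivWithinAt) hint]
  rw [hFdef]
  have hden1 : 2 * γ * (x - 2 * γ) ≠ 0 := by
    have : 0 < x - 2 * γ := by linarith
    positivity
  have hden2 : 2 * γ * (x - -(2 * γ)) ≠ 0 := by
    have : 0 < x - -(2 * γ) := by linarith
    positivity
  have u1 : (4 * γ ^ 2 - x * (2 * γ)) / (2 * γ * (x - 2 * γ)) = -1 := by
    rw [div_eq_iff hden1]; ring
  have u2 : (4 * γ ^ 2 - x * (-(2 * γ))) / (2 * γ * (x - -(2 * γ))) = 1 := by
    rw [div_eq_iff hden2]; ring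
  have a1 : 2 * γ / (2 * γ) = 1 := div_self h2γ.ne'
  have a2 : -(2 * γ) / (2 * γ) = -1 := by
    rw [neg_div, a1]
  simp only [u1, u2, a1, a2, Real.arcsin_one, Real.arcsin_neg_one,
    show 4 * γ ^ 2 - (2 * γ) ^ 2 = 0 by ring,
    show 4 * γ ^ 2 - (-(2 * γ)) ^ 2 = 0 by ring, Real.sqrt_zero]
  rw [hQdef]
  field_simp
  ring
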